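/- Let G be the group with presentation ⟨Θ, Ψ | Θ²Ψ = ΨΘ², (ΘΨ)³ = Θ⁴⟩. Then the assignment Θ ↦ [[0,1],[-1,0]], Ψ ↦ [[1,1],[0,1]] extends to a surjective group homomorphism π : G → SL₂(ℤ), the kernel of π is the subgroup generated by Θ⁴, and this kernel is infinite cyclic. -/

import Mathlib

/-- Generators of the group `G = ⟨Θ, Ψ | Θ²Ψ = ΨΘ², (ΘΨ)³ = Θ⁴⟩`. -/
inductive GTilde.Gen | theta | psi
  deriving DecidableEq

namespace GTilde

open FreeGroup

/-- The relations of `G`: `Θ²Ψ(Θ²)⁻¹Ψ⁻¹` and `(ΘΨ)³(Θ⁴)⁻¹`. -/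
def rels : Set (FreeGroup Gen) :=
  { (of Gen.theta) ^ 2 * of Gen.psi * ((of Gen.theta) ^ 2)⁻¹ * (of Gen.psi)⁻¹,
    (of Gen.theta * of Gen.psi) ^ 3 * ((of Gen.theta) ^ 4)⁻¹ }

/-- The group `G = ⟨Θ, Ψ | Θ²Ψ = ΨΘ², (ΘΨ)³ = Θ⁴⟩`. -/
abbrev G := PresentedGroup rels

/-- The generator `Θ` of `G`. -/
def Θ : G := PresentedGroup.of Gen.theta

/-- The generator `Ψ` of `G`. -/
def Ψ : G := PresentedGroup.of Gen.psi

end GTilde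

open GTilde

/-- The matrix `[[0,1],[-1,0]]` in `SL₂(ℤ)`. -/
noncomputable def Amat : Matrix.SpecialLinearGroup (Fin 2) ℤ :=
  ⟨!![0, 1; -1, 0], by simp [Matrix.det_fin_two_of]⟩

/-- The matrix `[[1,1],[0,1]]` in `SL₂(ℤ)`. -/
noncomputable def Bmat : Matrix.SpecialLinearGroup (Fin 2) ℤ :=
  ⟨!![1, 1; 0, 1], by simp [Matrix.det_fin_two_of]⟩

namespace GTilde

lemma rel_holds {r : FreeGroup Gen} (h : r ∈ rels) : PresentedGroup.mk rels r = 1 :=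
  (QuotientGroup.eq_one_iff r).2 (Subgroup.subset_normalClosure h)

open scoped commutatorElement in
lemma rel1 : Θ ^ 2 * Ψ = Ψ * Θ ^ 2 := by
  have h := rel_holds (Set.mem_insert _ _)
  simp only [map_mul, map_pow, map_inv] at h
  have h' : ⁅Θ ^ 2, Ψ⁆ = 1 := h
  exact (commutatorElement_eq_one_iff_commute.mp h').eq

lemma rel2 : (Θ * Ψ) ^ 3 = Θ ^ 4 := by
  have h := rel_holds (Set.mem_insert_of_mem _ rfl)
  simp only [map_mul, map_pow, map_inv] at h
  rw [mul_inv_eq_one] at h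
  exact h

lemma theta_sq_central (g : G) : Commute (Θ ^ 2) g := by
  have : g ∈ Subgroup.centralizer {Θ ^ 2} := by
    refine PresentedGroup.generated_by rels _ (fun j => ?_) g
    rw [Subgroup.mem_centralizer_iff]
    rintro h ⟨rfl⟩
    cases j
    · exact ((Commute.refl Θ).pow_left 2).eq
    · exact rel1
  exact Subgroup.mem_centralizer_iff.mp this _ rfl

end GTilde
open GTilde

namespace SL2Aux

open Matrix

local notation "SL2Z" => Matrix.SpecialLinearGroup (Fin 2) ℤ

lemma coe_A : (Amat : Matrix (Fin 2) (Fin 2) ℤ) = !![0, 1; -1, 0] := rfl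
lemma coe_B : (Bmat : Matrix (Fin 2) (Fin 2) ℤ) = !![1, 1; 0, 1] := rfl

lemma A_sq : Amat ^ 2 = -1 := by
  apply Subtype.ext
  rw [pow_two, Matrix.SpecialLinearGroup.coe_mul, coe_A, Matrix.mul_fin_two,
    Matrix.SpecialLinearGroup.coe_neg, Matrix.SpecialLinearGroup.coe_one, Matrix.one_fin_two]
  norm_num

lemma A_pow_four : Amat ^ 4 = 1 := by
  have : Amat ^ 4 = Amat ^ 2 * Amat ^ 2 := by rw [← pow_add]
  rw [this, A_sq, neg_one_mul, neg_neg]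

lemma AB_cube : (Amat * Bmat) ^ 3 = 1 := by
  apply Subtype.ext
  have h1 : ((Amat * Bmat : SL2Z) : Matrix (Fin 2) (Fin 2) ℤ) = !![0, 1; -1, -1] := by
    rw [Matrix.SpecialLinearGroup.coe_mul, coe_A, coe_B, Matrix.mul_fin_two]; norm_num
  rw [Matrix.SpecialLinearGroup.coe_pow, h1, Matrix.SpecialLinearGroup.coe_one]
  norm_num [pow_succ, Matrix.mul_fin_two]
  rw [Matrix.one_fin_two]

end SL2Aux

namespace SL2Aux

noncomputable def matOf : Gen → Matrix.SpecialLinearGroup (Fin 2) ℤ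
  | Gen.theta => Amat
  | Gen.psi => Bmat

lemma matOf_rels : ∀ r ∈ rels, FreeGroup.lift matOf r = 1 := by
  intro r hr
  rcases hr with rfl | rfl
  · simp only [map_mul, map_pow, map_inv, FreeGroup.lift_apply_of]
    show Amat ^ 2 * Bmat * (Amat ^ 2)⁻¹ * Bmat⁻¹ = 1
    rw [A_sq, inv_neg, inv_one, mul_neg, mul_one, neg_one_mul, neg_neg, mul_inv_cancel]
  · simp only [map_mul, map_pow, map_inv, FreeGroup.lift_apply_of]
    show (Amat * Bmat) ^ 3 * (Amat ^ 4)⁻¹ = 1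
    rw [AB_cube, A_pow_four, inv_one, mul_one]

noncomputable def piHom : G →* Matrix.SpecialLinearGroup (Fin 2) ℤ :=
  PresentedGroup.toGroup matOf_rels

@[simp] lemma piHom_theta : piHom Θ = Amat := PresentedGroup.toGroup.of matOf_rels
@[simp] lemma piHom_psi : piHom Ψ = Bmat := PresentedGroup.toGroup.of matOf_rels

def intOf : Gen → Multiplicative ℤ
  | Gen.theta => Multiplicative.ofAdd 3
  | Gen.psi => Multiplicative.ofAdd 1

lemma intOf_rels : ∀ r ∈ rels, FreeGroup.lift intOf r = 1 := by
  intro r hr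
  rcases hr with rfl | rfl
  · simp only [map_mul, map_pow, map_inv, FreeGroup.lift_apply_of]
    exact commutatorElement_eq_one_iff_commute.mpr (Commute.all _ _)
  · simp only [map_mul, map_pow, map_inv, FreeGroup.lift_apply_of]
    show (Multiplicative.ofAdd 3 * Multiplicative.ofAdd 1) ^ 3 *
      ((Multiplicative.ofAdd 3 : Multiplicative ℤ) ^ 4)⁻¹ = 1
    rw [← ofAdd_add, ← ofAdd_nsmul, ← ofAdd_nsmul, ← ofAdd_neg, ← ofAdd_add]
    norm_num

noncomputable def sigmaHom : G →* Multiplicative ℤ :=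
  PresentedGroup.toGroup intOf_rels

lemma sigma_theta : sigmaHom Θ = Multiplicative.ofAdd 3 := PresentedGroup.toGroup.of intOf_rels

lemma theta4_infinite : ∀ n : ℤ, (Θ ^ 4) ^ n = 1 → n = 0 := by
  intro n hn
  have := congrArg sigmaHom hn
  rw [map_zpow, map_pow, sigma_theta, map_one, ← ofAdd_nsmul, ← ofAdd_zsmul] at this
  have h2 := congrArg Multiplicative.toAdd this
  simp only [toAdd_ofAdd, toAdd_one, smul_eq_mul, nsmul_eq_mul] at h2
  push_cast at h2
  omega

end SL2Aux

namespace SL2Aux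

open Matrix

local notation "SL2Z" => Matrix.SpecialLinearGroup (Fin 2) ℤ

lemma Bmat_eq_T : Bmat = ModularGroup.T := Subtype.ext rfl

lemma coe_B_zpow (n : ℤ) : ((Bmat ^ n : SL2Z) : Matrix (Fin 2) (Fin 2) ℤ) = !![1, n; 0, 1] := by
  rw [Bmat_eq_T]; exact ModularGroup.coe_T_zpow n

lemma mem_closure_AB (M : SL2Z) : M ∈ Subgroup.closure ({Amat, Bmat} : Set SL2Z) := by
  set cl := Subgroup.closure ({Amat, Bmat} : Set SL2Z) with hcl
  have hA : Amat ∈ cl := Subgroup.subset_closure (Set.mem_insert _ _)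
  have hB : Bmat ∈ cl := Subgroup.subset_closure (Set.mem_insert_of_mem _ rfl)
  have hBz : ∀ n : ℤ, Bmat ^ n ∈ cl := fun n => Subgroup.zpow_mem cl hB n
  suffices H : ∀ n : ℕ, ∀ M : SL2Z, (M.1 1 0).natAbs = n → M ∈ cl from H _ M rfl
  intro n
  induction n using Nat.strong_induction_on with
  | _ n ih =>
  intro M hM
  rcases Nat.eq_zero_or_pos n with hn | hn
  · have hc : M.1 1 0 = 0 := by omega
    have hdet := M.2
    rw [Matrix.det_fin_two, hc, mul_zero, sub_zero] at hdet
    rcases Int.mul_eq_one_iff_eq_one_or_neg_one.mp hdet with ⟨h1, h2⟩ | ⟨h1, h2⟩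
    · have : M = Bmat ^ (M.1 0 1) := by
        apply Subtype.ext
        rw [coe_B_zpow]
        conv_lhs => rw [Matrix.eta_fin_two M.1]
        rw [h1, h2, hc]
      rw [this]; exact hBz _
    · have : M = Amat ^ 2 * Bmat ^ (-(M.1 0 1)) := by
        apply Subtype.ext
        rw [Matrix.SpecialLinearGroup.coe_mul, A_sq, coe_B_zpow,
          Matrix.SpecialLinearGroup.coe_neg, Matrix.SpecialLinearGroup.coe_one]
        conv_lhs => rw [Matrix.eta_fin_two M.1]
        rw [h1, h2, hc]
        ext i j
        fin_cases i <;> fin_cases j <;> simp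
      rw [this]
      exact Subgroup.mul_mem _ (pow_mem hA 2) (hBz _)
  · have hc : M.1 1 0 ≠ 0 := by omega
    set q : ℤ := M.1 0 0 / M.1 1 0 with hq
    set N : SL2Z := Amat * Bmat ^ (-q) * M with hN
    have hN10 : N.1 1 0 = -(M.1 0 0 % M.1 1 0) := by
      rw [hN, Matrix.SpecialLinearGroup.coe_mul, Matrix.SpecialLinearGroup.coe_mul,
        coe_A, coe_B_zpow, Int.emod_def, ← hq]
      simp [Matrix.mul_apply, Fin.sum_univ_succ]
      ring
    have hlt : (N.1 1 0).natAbs < n := by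
      rw [hN10]
      have h1 : 0 ≤ M.1 0 0 % M.1 1 0 := Int.emod_nonneg _ hc
      have h3 : M.1 0 0 % M.1 1 0 < |M.1 1 0| := Int.emod_lt_abs _ hc
      rw [Int.abs_eq_natAbs] at h3
      omega
    have hmem : N ∈ cl := ih _ (by omega) N rfl
    have : M = Bmat ^ q * Amat⁻¹ * N := by rw [hN]; group
    rw [this]
    exact Subgroup.mul_mem _ (Subgroup.mul_mem _ (hBz q) (Subgroup.inv_mem _ hA)) hmem

lemma piHom_surjective : Function.Surjective piHom := by
  intro M
  have h : M ∈ Subgroup.closure ({Amat, Bmat} : Set SL2Z) := mem_closure_AB M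
  have hsub : Subgroup.closure ({Amat, Bmat} : Set SL2Z) ≤ piHom.range := by
    rw [Subgroup.closure_le]
    rintro x (rfl | rfl)
    exacts [⟨Θ, piHom_theta⟩, ⟨Ψ, piHom_psi⟩]
  exact hsub h

end SL2Aux

namespace SL2Aux

open Matrix UpperHalfPlane

local notation "SL2Z" => Matrix.SpecialLinearGroup (Fin 2) ℤ

noncomputable def Ymat : SL2Z := Amat * Bmat

lemma coe_Y : (Ymat : Matrix (Fin 2) (Fin 2) ℤ) = !![0, 1; -1, -1] := by
  rw [Ymat, Matrix.SpecialLinearGroup.coe_mul, coe_A, coe_B, Matrix.mul_fin_two]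
  norm_num

lemma coe_Y2 : ((Ymat ^ 2 : SL2Z) : Matrix (Fin 2) (Fin 2) ℤ) = !![-1, -1; 1, 0] := by
  rw [pow_two, Matrix.SpecialLinearGroup.coe_mul, coe_Y, Matrix.mul_fin_two]
  norm_num

lemma smul_coe (g : SL2Z) (z : ℍ) :
    ((g • z : ℍ) : ℂ) = ((g.1 0 0 : ℂ) * (z : ℂ) + (g.1 0 1 : ℂ)) /
      ((g.1 1 0 : ℂ) * (z : ℂ) + (g.1 1 1 : ℂ)) := by
  rw [UpperHalfPlane.specialLinearGroup_apply]
  rfl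

lemma A_smul_re {z : ℍ} (hz : z.re < 0) : 0 < (Amat • z).re := by
  have him : 0 < (z : ℂ).im := z.2
  have hw : (z : ℂ) ≠ 0 := fun h => by simp [h] at him
  have h : ((Amat • z : ℍ) : ℂ) = 1 / (-(z : ℂ)) := by
    rw [smul_coe, coe_A]
    norm_num
  have h2 : (Amat • z).re = ((1 : ℂ) / (-(z : ℂ))).re := by
    rw [← h]; rfl
  rw [h2, Complex.div_re]
  have hre : (z : ℂ).re < 0 := hz
  have hns : 0 < Complex.normSq (-(z : ℂ)) := Complex.normSq_pos.mpr (by simpa using hw)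
  apply add_pos_of_pos_of_nonneg
  · apply div_pos _ hns
    simp only [Complex.one_re, Complex.neg_re, one_mul]
    linarith
  · simp

lemma Y_smul_re {z : ℍ} (hz : 0 < z.re) : (Ymat • z).re < 0 := by
  have him : 0 < (z : ℂ).im := z.2
  have hd : -(z : ℂ) - 1 ≠ 0 := by
    intro h
    have := congrArg Complex.im h
    simp at this
    exact z.im_pos.ne' this
  have h : ((Ymat • z : ℍ) : ℂ) = 1 / (-(z : ℂ) - 1) := by
    rw [smul_coe, coe_Y]
    norm_num
    ring_nf
  have h2 : (Ymat • z).re = ((1 : ℂ) / (-(z : ℂ) - 1)).re := by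
    rw [← h]; rfl
  rw [h2, Complex.div_re]
  have hre : 0 < (z : ℂ).re := hz
  have hns : 0 < Complex.normSq (-(z : ℂ) - 1) := Complex.normSq_pos.mpr hd
  have : (-(z : ℂ) - 1).re < 0 := by
    simp only [Complex.sub_re, Complex.neg_re, Complex.one_re]
    linarith
  simp only [Complex.one_re, Complex.one_im, one_mul, zero_mul, zero_div, add_zero]
  exact div_neg_of_neg_of_pos this hns

lemma Y2_smul_re {z : ℍ} (hz : 0 < z.re) : ((Ymat ^ 2) • z).re < 0 := by
  have him : 0 < (z : ℂ).im := z.2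
  have hw : (z : ℂ) ≠ 0 := fun h => by simp [h] at him
  have h : (((Ymat ^ 2) • z : ℍ) : ℂ) = (-(z : ℂ) - 1) / (z : ℂ) := by
    rw [smul_coe, coe_Y2]
    norm_num
    ring_nf
  have h2 : ((Ymat ^ 2) • z).re = ((-(z : ℂ) - 1) / (z : ℂ)).re := by
    rw [← h]; rfl
  rw [h2, Complex.div_re]
  have hre : 0 < (z : ℂ).re := hz
  have hns : 0 < Complex.normSq (z : ℂ) := Complex.normSq_pos.mpr hw
  have hnum : (-(z : ℂ) - 1).re * (z : ℂ).re + (-(z : ℂ) - 1).im * (z : ℂ).im < 0 := by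
    simp only [Complex.sub_re, Complex.neg_re, Complex.one_re, Complex.sub_im,
      Complex.neg_im, Complex.one_im, sub_zero]
    nlinarith
  have := div_neg_of_neg_of_pos hnum hns
  calc (-(z:ℂ) - 1).re * (z:ℂ).re / Complex.normSq (z:ℂ) +
      (-(z:ℂ) - 1).im * (z:ℂ).im / Complex.normSq (z:ℂ)
      = ((-(z:ℂ) - 1).re * (z:ℂ).re + (-(z:ℂ) - 1).im * (z:ℂ).im) / Complex.normSq (z:ℂ) := by
        ring
    _ < 0 := this

end SL2Aux

namespace SL2Aux

open Matrix UpperHalfPlane Monoid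

local notation "SL2Z" => Matrix.SpecialLinearGroup (Fin 2) ℤ

noncomputable def tau : SL2Z →* Equiv.Perm ℍ := MulAction.toPermHom SL2Z ℍ

@[simp] lemma tau_apply (g : SL2Z) (z : ℍ) : tau g z = g • z := rfl

lemma tau_neg_one : tau (-1) = 1 := by
  apply Equiv.ext
  intro z
  show (-(1 : SL2Z)) • z = z
  rw [ModularGroup.SL_neg_smul, one_smul]

lemma tau_A_sq : (tau Amat) ^ 2 = 1 := by rw [← map_pow, A_sq, tau_neg_one]

lemma tau_Y_cube : (tau Ymat) ^ 3 = 1 := by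
  rw [← map_pow, show Ymat ^ 3 = 1 from AB_cube, _root_.map_one]

noncomputable def powHom (n : ℕ) {Γ : Type*} [Group Γ] (g : Γ) (hg : g ^ n = 1) :
    Multiplicative (ZMod n) →* Γ :=
  AddMonoidHom.toMultiplicativeLeft <| ZMod.lift n ⟨zmultiplesHom (Additive Γ) (Additive.ofMul g),
    by rw [zmultiplesHom_apply, ← ofMul_zpow, zpow_natCast, hg, ofMul_one]⟩

lemma powHom_apply (n : ℕ) {Γ : Type*} [Group Γ] (g : Γ) (hg : g ^ n = 1) (k : ℤ) :
    powHom n g hg (Multiplicative.ofAdd ((k : ℤ) : ZMod n)) = g ^ k := by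
  rw [powHom, AddMonoidHom.coe_toMultiplicativeLeft]
  simp only [Function.comp_apply, toAdd_ofAdd, ZMod.lift_coe, zmultiplesHom_apply,
    ← ofMul_zpow, toMul_ofMul]

abbrev HH : Bool → Type := fun b => Multiplicative (ZMod (cond b 2 3))

noncomputable def ff : ∀ b, HH b →* Equiv.Perm ℍ
  | true => powHom 2 (tau Amat) tau_A_sq
  | false => powHom 3 (tau Ymat) tau_Y_cube

def XS : Bool → Set ℍ := fun b => cond b {z | 0 < z.re} {z | z.re < 0}

lemma hXnonempty : ∀ b, (XS b).Nonempty := by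
  intro b
  cases b
  · exact ⟨⟨⟨-1, 1⟩, by norm_num [Complex.lt_def]⟩, by simp [XS]⟩
  · exact ⟨⟨⟨1, 1⟩, by norm_num [Complex.lt_def]⟩, by simp [XS]⟩

lemma hXdisj : Pairwise (Function.onFun Disjoint XS) := by
  have key : Disjoint (XS true) (XS false) := by
    rw [Set.disjoint_left]
    intro z h1 h2
    simp only [XS, Bool.cond_true, Bool.cond_false, Set.mem_setOf_eq] at h1 h2
    linarith
  intro i j hij
  cases i <;> cases j
  · exact absurd rfl hij
  · show Disjoint (XS false) (XS true); exact key.symm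
  · show Disjoint (XS true) (XS false); exact key
  · exact absurd rfl hij

lemma zmod2_cases : ∀ h : Multiplicative (ZMod 2), h ≠ 1 →
    h = Multiplicative.ofAdd ((1 : ℤ) : ZMod 2) := by decide

lemma zmod3_cases : ∀ h : Multiplicative (ZMod 3), h ≠ 1 →
    h = Multiplicative.ofAdd ((1 : ℤ) : ZMod 3) ∨
      h = Multiplicative.ofAdd ((2 : ℤ) : ZMod 3) := by decide

open Pointwise in
lemma hpp : Pairwise fun i j => ∀ h : HH i, h ≠ 1 → ff i h • XS j ⊆ XS i := by
  intro i j hij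
  intro h hne
  intro w hw
  rcases Set.mem_smul_set.mp hw with ⟨z, hz, rfl⟩
  cases i
  · -- i = false : Y-factor
    have hj : j = true := by cases j <;> simp at hij ⊢
    subst hj
    have hz' : 0 < z.re := hz
    rcases zmod3_cases h hne with rfl | rfl
    · show (((powHom 3 (tau Ymat) tau_Y_cube) (Multiplicative.ofAdd ((1:ℤ) : ZMod 3))) z).re < 0
      rw [powHom_apply 3 _ tau_Y_cube 1]
      simpa using Y_smul_re hz'
    · show (((powHom 3 (tau Ymat) tau_Y_cube) (Multiplicative.ofAdd ((2:ℤ) : ZMod 3))) z).re < 0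
      rw [powHom_apply 3 _ tau_Y_cube 2]
      have h2 : tau Ymat ^ (2:ℤ) = tau (Ymat ^ 2) := by
        rw [show (2:ℤ) = ((2:ℕ):ℤ) from rfl, zpow_natCast, ← map_pow]
      rw [h2]
      exact Y2_smul_re hz'
  · -- i = true : A-factor
    have hj : j = false := by cases j <;> simp at hij ⊢
    subst hj
    have hz' : z.re < 0 := hz
    rw [zmod2_cases h hne]
    show (0 : ℝ) < (((powHom 2 (tau Amat) tau_A_sq) (Multiplicative.ofAdd ((1:ℤ) : ZMod 2))) z).re
    rw [powHom_apply 2 _ tau_A_sq 1]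
    simpa using A_smul_re hz'

end SL2Aux

namespace SL2Aux

open Matrix UpperHalfPlane Monoid

local notation "SL2Z" => Matrix.SpecialLinearGroup (Fin 2) ℤ

inductive Letter | X | Y1 | Y2

def fac : Letter → Bool
  | .X => true
  | .Y1 => false
  | .Y2 => false

noncomputable def evalG : Letter → G
  | .X => Θ
  | .Y1 => Θ * Ψ
  | .Y2 => (Θ * Ψ) ^ 2

def elt : ∀ l : Letter, HH (fac l)
  | .X => Multiplicative.ofAdd ((1 : ℤ) : ZMod 2)
  | .Y1 => Multiplicative.ofAdd ((1 : ℤ) : ZMod 3)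
  | .Y2 => Multiplicative.ofAdd ((2 : ℤ) : ZMod 3)

lemma elt_ne_one : ∀ l, elt l ≠ 1 := by intro l; cases l <;> decide

def Red (L : List Letter) : Prop := L.Chain' (fun a b => fac a ≠ fac b)

def toWord (L : List Letter) (h : Red L) : CoprodI.Word HH where
  toList := L.map fun l => ⟨fac l, elt l⟩
  ne_one := by
    intro p hp
    rcases List.mem_map.mp hp with ⟨l, _, rfl⟩
    exact elt_ne_one l
  chain_ne := by
    rw [List.isChain_map]
    exact h

lemma letter_key : ∀ l : Letter,
    CoprodI.lift ff (CoprodI.of (elt l)) = tau (piHom (evalG l)) := by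
  intro l
  cases l
  · rw [CoprodI.lift_of]
    show (powHom 2 (tau Amat) tau_A_sq) (Multiplicative.ofAdd ((1:ℤ) : ZMod 2)) = _
    rw [powHom_apply, zpow_one, show evalG .X = Θ from rfl, piHom_theta]
  · rw [CoprodI.lift_of]
    show (powHom 3 (tau Ymat) tau_Y_cube) (Multiplicative.ofAdd ((1:ℤ) : ZMod 3)) = _
    rw [powHom_apply, zpow_one, show evalG .Y1 = Θ * Ψ from rfl, _root_.map_mul, piHom_theta,
      piHom_psi]
    rfl
  · rw [CoprodI.lift_of]
    show (powHom 3 (tau Ymat) tau_Y_cube) (Multiplicative.ofAdd ((2:ℤ) : ZMod 3)) = _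
    rw [powHom_apply, show evalG .Y2 = (Θ * Ψ) ^ 2 from rfl, _root_.map_pow, _root_.map_mul,
      piHom_theta, piHom_psi, show (2:ℤ) = ((2:ℕ):ℤ) from rfl, zpow_natCast, ← _root_.map_pow]
    rfl

lemma word_prod (L : List Letter) (h : Red L) :
    CoprodI.lift ff (toWord L h).prod = tau (piHom ((L.map evalG).prod)) := by
  have h1 : (toWord L h).prod = (L.map fun l => CoprodI.of (elt l)).prod := by
    rw [CoprodI.Word.prod, show (toWord L h).toList = L.map (fun l => ⟨fac l, elt l⟩) from rfl,
      List.map_map]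
    rfl
  rw [h1, map_list_prod, map_list_prod, map_list_prod, List.map_map, List.map_map, List.map_map]
  congr 1
  refine List.map_congr_left fun l _ => ?_
  simp only [Function.comp_apply]
  exact letter_key l

def Cset : Set G := {g | ∃ (m : ℤ) (L : List Letter), Red L ∧ g = Θ ^ (2 * m) * (L.map evalG).prod}

lemma central_zpow (m : ℤ) (g : G) : Commute (Θ ^ (2 * m)) g := by
  have h : Θ ^ (2 * m) = (Θ ^ (2:ℕ)) ^ m := by
    rw [← zpow_natCast Θ 2, ← _root_.zpow_mul]
    norm_num
  rw [h]
  exact (theta_sq_central g).zpow_left m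

lemma swap_mul {c a : G} (h : Commute c a) (E : G) : a * (c * E) = c * (a * E) := by
  rw [← mul_assoc, ← h.eq, mul_assoc]

lemma zshift_mem (k : ℤ) {g : G} (hg : g ∈ Cset) : Θ ^ (2 * k) * g ∈ Cset := by
  obtain ⟨m, L, hL, rfl⟩ := hg
  exact ⟨k + m, L, hL, by
    rw [← mul_assoc, ← _root_.zpow_add, show 2 * k + 2 * m = 2 * (k + m) from by ring]⟩

lemma mul_theta_mem {g : G} (hg : g ∈ Cset) : Θ * g ∈ Cset := by
  obtain ⟨m, L, hL, rfl⟩ := hg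
  rw [swap_mul (central_zpow m Θ)]
  match L, hL with
  | [], _ => exact ⟨m, [.X], List.isChain_singleton _, by simp [evalG]⟩
  | .X :: L', hL =>
    refine ⟨m + 1, L', List.IsChain.tail hL, ?_⟩
    simp only [List.map_cons, List.prod_cons, show evalG .X = Θ from rfl]
    group
  | .Y1 :: L', hL =>
    refine ⟨m, .X :: .Y1 :: L', ?_, ?_⟩
    · exact List.isChain_cons_cons.mpr ⟨by simp [fac], hL⟩
    · simp [evalG, mul_assoc]
  | .Y2 :: L', hL =>
    refine ⟨m, .X :: .Y2 :: L', ?_, ?_⟩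
    · exact List.isChain_cons_cons.mpr ⟨by simp [fac], hL⟩
    · simp [evalG, mul_assoc]

lemma mul_y_mem {g : G} (hg : g ∈ Cset) : (Θ * Ψ) * g ∈ Cset := by
  obtain ⟨m, L, hL, rfl⟩ := hg
  rw [swap_mul (central_zpow m (Θ * Ψ))]
  match L, hL with
  | [], _ => exact ⟨m, [.Y1], List.isChain_singleton _, by simp [evalG]⟩
  | .X :: L', hL =>
    refine ⟨m, .Y1 :: .X :: L', ?_, ?_⟩
    · exact List.isChain_cons_cons.mpr ⟨by simp [fac], hL⟩
    · simp [evalG, mul_assoc]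
  | .Y1 :: L', hL =>
    refine ⟨m, .Y2 :: L', ?_, ?_⟩
    · match L', hL with
      | [], _ => exact List.isChain_singleton _
      | a :: L'', hL =>
        refine List.isChain_cons_cons.mpr ⟨?_, List.IsChain.tail hL⟩
        have := (List.isChain_cons_cons.mp hL).1
        simpa [fac] using this
    · simp only [List.map_cons, List.prod_cons, show evalG .Y1 = Θ * Ψ from rfl,
        show evalG .Y2 = (Θ * Ψ) ^ 2 from rfl]
      rw [pow_two]
      group
  | .Y2 :: L', hL =>
    refine ⟨m + 2, L', List.IsChain.tail hL, ?_⟩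
    simp only [List.map_cons, List.prod_cons, show evalG .Y2 = (Θ * Ψ) ^ 2 from rfl]
    have e1 : (Θ * Ψ) * ((Θ * Ψ) ^ 2 * (List.map evalG L').prod)
        = Θ ^ (4:ℕ) * (List.map evalG L').prod := by
      rw [← mul_assoc, ← pow_succ', show (2:ℕ) + 1 = 3 from rfl, rel2]
    rw [e1]
    group

lemma one_mem_Cset : (1 : G) ∈ Cset := ⟨0, [], List.isChain_nil, by simp⟩

lemma all_in_Cset (g : G) : g ∈ Cset := by
  let K : Subgroup G :=
    { carrier := {g | (∀ h ∈ Cset, g * h ∈ Cset) ∧ (∀ h ∈ Cset, g⁻¹ * h ∈ Cset)}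
      one_mem' := by
        constructor <;> intro h hh <;> simpa
      mul_mem' := by
        rintro a b ⟨ha1, ha2⟩ ⟨hb1, hb2⟩
        constructor
        · intro h hh
          rw [mul_assoc]
          exact ha1 _ (hb1 h hh)
        · intro h hh
          rw [_root_.mul_inv_rev, mul_assoc]
          exact hb2 _ (ha2 h hh)
      inv_mem' := by
        rintro a ⟨ha1, ha2⟩
        exact ⟨ha2, by simpa using ha1⟩ }
  have hgen : ∀ j : Gen, PresentedGroup.of j ∈ K := by
    intro j
    cases j
    · -- theta
      constructor
      · intro h hh
        exact mul_theta_mem hh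
      · intro h hh
        show Θ⁻¹ * h ∈ Cset
        have e : (Θ)⁻¹ * h = Θ ^ (2 * (-1:ℤ)) * (Θ * h) := by group
        rw [e]
        exact zshift_mem _ (mul_theta_mem hh)
    · -- psi
      constructor
      · intro h hh
        show Ψ * h ∈ Cset
        have e : Ψ * h = Θ ^ (2 * (-1:ℤ)) * (Θ * ((Θ * Ψ) * h)) := by group
        rw [e]
        exact zshift_mem _ (mul_theta_mem (mul_y_mem hh))
      · intro h hh
        show Ψ⁻¹ * h ∈ Cset
        have e : (Ψ)⁻¹ * h = Θ ^ (2 * (-2:ℤ)) * ((Θ * Ψ) * ((Θ * Ψ) * (Θ * h))) := by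
          have h4 : Θ ^ (2 * (-2:ℤ)) = ((Θ * Ψ) * ((Θ * Ψ) * (Θ * Ψ)))⁻¹ := by
            rw [show (Θ * Ψ) * ((Θ * Ψ) * (Θ * Ψ)) = (Θ * Ψ) ^ 3 from by
                rw [← pow_two, ← pow_succ'], rel2,
              ← zpow_natCast Θ 4, ← _root_.zpow_neg,
              show (2 * (-2:ℤ)) = -((4:ℕ):ℤ) from by norm_num]
          rw [h4]
          group
        rw [e]
        exact zshift_mem _ (mul_y_mem (mul_y_mem (mul_theta_mem hh)))
  have hK : g ∈ K := PresentedGroup.generated_by rels K hgen g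
  have := hK.1 1 one_mem_Cset
  simpa using this

lemma hcard : (3 : Cardinal) ≤ Cardinal.mk Bool ∨ ∃ i, (3 : Cardinal) ≤ Cardinal.mk (HH i) := by
  right
  refine ⟨false, ?_⟩
  have e : Cardinal.mk (HH false) = Cardinal.mk (ZMod 3) :=
    Cardinal.mk_congr Multiplicative.toAdd
  rw [e, Cardinal.mk_fintype (ZMod 3), ZMod.card 3]
  norm_num

lemma neg_one_ne_one : (-1 : SL2Z) ≠ 1 := by
  intro h
  have := congrArg (fun M : SL2Z => M.1 0 0) h
  simp only [Matrix.SpecialLinearGroup.coe_neg, Matrix.SpecialLinearGroup.coe_one,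
    Matrix.neg_apply, Matrix.one_apply_eq] at this
  norm_num at this

lemma ker_piHom : piHom.ker = Subgroup.zpowers (Θ ^ 4) := by
  apply le_antisymm
  · intro g hg
    rw [MonoidHom.mem_ker] at hg
    obtain ⟨m, L, hL, rfl⟩ := all_in_Cset g
    have hth : piHom (Θ ^ (2 * m)) = (Amat ^ 2) ^ m := by
      rw [_root_.map_zpow, piHom_theta, ← zpow_natCast Amat 2, ← _root_.zpow_mul]
      norm_num
    have hg1 : (Amat ^ 2) ^ m * piHom ((L.map evalG).prod) = 1 := by
      rw [← hth, ← _root_.map_mul]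
      exact hg
    have htau2 : tau (Amat ^ 2) = 1 := by rw [A_sq, tau_neg_one]
    have h2 : CoprodI.lift ff (toWord L hL).prod = 1 := by
      rw [word_prod]
      have hE : piHom ((L.map evalG).prod) = (Amat ^ 2) ^ (-m) := by
        rw [_root_.zpow_neg]
        exact eq_inv_of_mul_eq_one_right hg1
      rw [hE, _root_.map_zpow, htau2, _root_.one_zpow]
    have hempty := CoprodI.empty_of_word_prod_eq_one ff hcard XS hXnonempty hXdisj hpp h2
    have hLnil : L = [] := by
      have h3 : (toWord L hL).toList = [] := by rw [hempty]; rfl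
      simpa [toWord] using h3
    subst hLnil
    simp only [List.map_nil, List.prod_nil, mul_one] at hg ⊢
    have hm : (-1 : SL2Z) ^ m = 1 := by
      rw [← A_sq, ← hth]
      exact hg
    have hmeven : Even m := by
      by_contra hodd
      rw [Int.not_even_iff_odd] at hodd
      obtain ⟨k, hk⟩ := hodd
      rw [hk, _root_.zpow_add, _root_.zpow_mul, zpow_one,
        show ((-1:SL2Z) ^ (2:ℤ)) = 1 from by
          rw [show (2:ℤ) = ((2:ℕ):ℤ) from rfl, zpow_natCast]; simp,
        _root_.one_zpow, one_mul] at hm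
      exact neg_one_ne_one hm
    obtain ⟨k, hk⟩ := hmeven
    refine ⟨k, ?_⟩
    show (Θ ^ 4) ^ k = Θ ^ (2 * m)
    rw [← zpow_natCast Θ 4, ← _root_.zpow_mul, hk,
      show ((4:ℕ):ℤ) * k = 2 * (k + k) from by push_cast; ring]
  · rw [Subgroup.zpowers_le]
    rw [MonoidHom.mem_ker, map_pow, piHom_theta]
    exact A_pow_four

end SL2Aux

/-- `Θ ↦ [[0,1],[-1,0]]`, `Ψ ↦ [[1,1],[0,1]]` extends to a surjective homomorphism
`π : G → SL₂(ℤ)` whose kernel is the subgroup generated by `Θ⁴`, and this kernel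
is infinite cyclic (i.e. `Θ⁴` has infinite order). -/
theorem stmt0 :
    ∃ π : G →* Matrix.SpecialLinearGroup (Fin 2) ℤ,
      π Θ = Amat ∧ π Ψ = Bmat ∧ Function.Surjective π ∧
      π.ker = Subgroup.zpowers (Θ ^ 4) ∧
      ∀ n : ℤ, (Θ ^ 4) ^ n = 1 → n = 0 := by
  exact ⟨SL2Aux.piHom, SL2Aux.piHom_theta, SL2Aux.piHom_psi, SL2Aux.piHom_surjective,
    SL2Aux.ker_piHom, SL2Aux.theta4_infinite⟩
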